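/- Let G be a signed graph with signed Laplacian L = K − A⁺ + A⁻ and unsigned Laplacian L̄ = K − A⁺ − A⁻, and let ℒ = [[K − A⁺, −A⁻],[−A⁻, K − A⁺]] be the Laplacian of the Gremban expansion. Then ℒ is similar to L̄ ⊕ L and spec(ℒ) = spec(L̄) ∪ spec(L); every eigenpair (λ, x) of L lifts to the antisymmetric eigenpair (λ, (x, −x)ᵀ) of ℒ and every eigenpair (μ, y) of L̄ lifts to the symmetric eigenpair (μ, (y, y)ᵀ) of ℒ. -/

import Mathlib

/-- A signed graph: a simple graph together with a symmetric `±1`-valued sign function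
on its edges. -/
structure SignedGraph (V : Type*) where
  G : SimpleGraph V
  sign : V → V → ℤ
  sign_symm : ∀ u v, sign u v = sign v u
  sign_pm : ∀ u v, G.Adj u v → sign u v = 1 ∨ sign u v = -1

namespace SignedGraph

variable {V : Type*} (S : SignedGraph V)

/-- The Gremban expansion of a signed graph: each vertex `v` is doubled into the two
polarities `(v, true)` (positive) and `(v, false)` (negative); a positive edge lifts to
two edges between equal polarities, and a negative edge to two edges between opposite
polarities. -/
def gremban : SimpleGraph (V × Bool) where
  Adj x y := S.G.Adj x.1 y.1 ∧ ((x.2 = y.2) ↔ S.sign x.1 y.1 = 1)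
  symm := by
    refine ⟨?_⟩
    rintro ⟨u, a⟩ ⟨v, b⟩ ⟨h, hs⟩
    refine ⟨h.symm, ?_⟩
    rw [S.sign_symm v u, eq_comm]
    exact hs
  loopless := by
    refine ⟨?_⟩
    rintro ⟨u, a⟩ ⟨h, _⟩
    exact S.G.loopless.irrefl u h

/-- The Gremban involution, swapping the two polarities of every vertex. -/
def eta : V × Bool → V × Bool := fun x => (x.1, !x.2)

end SignedGraph

open SignedGraph

namespace SignedGraph

variable {V : Type*} [Fintype V] [DecidableEq V]

open Classical in
/-- The signed adjacency matrix of a signed graph. -/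
noncomputable def adjMat (S : SignedGraph V) : Matrix V V ℝ :=
  fun u v => if S.G.Adj u v then (S.sign u v : ℝ) else 0

/-- The positive part `A⁺ = max(A, 0)` of the signed adjacency matrix. -/
noncomputable def adjPos (S : SignedGraph V) : Matrix V V ℝ :=
  fun u v => max (S.adjMat u v) 0

/-- The negative part `A⁻ = max(−A, 0)` of the signed adjacency matrix. -/
noncomputable def adjNeg (S : SignedGraph V) : Matrix V V ℝ :=
  fun u v => max (-S.adjMat u v) 0

/-- The Gremban adjacency matrix `𝒜 = [[A⁺, A⁻],[A⁻, A⁺]]`, which is the adjacency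
matrix of the Gremban expansion. -/
noncomputable def grembanAdj (S : SignedGraph V) : Matrix (V ⊕ V) (V ⊕ V) ℝ :=
  Matrix.fromBlocks (S.adjPos) (S.adjNeg) (S.adjNeg) (S.adjPos)

/-- A signed graph is balanced if some switching function `θ : V → {±1}` makes all edge
signs positive. -/
def BalancedSw (S : SignedGraph V) : Prop :=
  ∃ θ : V → ℤ, (∀ v, θ v = 1 ∨ θ v = -1) ∧
    ∀ u v, S.G.Adj u v → θ u * θ v * S.sign u v = 1

end SignedGraph

namespace SignedGraph

variable {V : Type*} [Fintype V] [DecidableEq V]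

/-- The degree matrix `K` of a signed graph: the diagonal matrix of (unsigned)
degrees, i.e. row sums of `Ā = A⁺ + A⁻`. -/
noncomputable def degMat (S : SignedGraph V) : Matrix V V ℝ :=
  Matrix.diagonal fun v => ∑ w, (S.adjPos v w + S.adjNeg v w)

/-- The signed Laplacian `L = K − A⁺ + A⁻`. -/
noncomputable def signedLap (S : SignedGraph V) : Matrix V V ℝ :=
  S.degMat - S.adjPos + S.adjNeg

/-- The unsigned Laplacian `L̄ = K − A⁺ − A⁻`. -/
noncomputable def unsignedLap (S : SignedGraph V) : Matrix V V ℝ :=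
  S.degMat - S.adjPos - S.adjNeg

/-- The Gremban Laplacian `ℒ = [[K − A⁺, −A⁻],[−A⁻, K − A⁺]]`, the Laplacian matrix of
the Gremban expansion. -/
noncomputable def grembanLap (S : SignedGraph V) : Matrix (V ⊕ V) (V ⊕ V) ℝ :=
  Matrix.fromBlocks (S.degMat - S.adjPos) (-S.adjNeg) (-S.adjNeg) (S.degMat - S.adjPos)

end SignedGraph

section Aux

open Matrix Polynomial

variable {n : Type*} [Fintype n] [DecidableEq n]

lemma charpoly_conj_aux (U B : Matrix n n ℝ) (hU : IsUnit U.det) :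
    (U * B * U⁻¹).charpoly = B.charpoly := by
  have h1 : U * U⁻¹ = 1 := Matrix.mul_nonsing_inv U hU
  have hmap : U.map C * (U⁻¹).map C = 1 := by
    rw [← Matrix.map_mul, h1, Matrix.map_one _ (map_zero C) (map_one C)]
  have key : Matrix.charmatrix (U * B * U⁻¹) =
      U.map C * Matrix.charmatrix B * (U⁻¹).map C := by
    unfold Matrix.charmatrix
    have hsc : ∀ M : Matrix n n ℝ[X],
        M * Matrix.scalar n (X : ℝ[X]) = Matrix.scalar n (X : ℝ[X]) * M := by
      intro M
      exact (Matrix.scalar_commute (X : ℝ[X]) (fun r' => Commute.all _ _) M).symm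
    rw [Matrix.mul_sub, Matrix.sub_mul]
    congr 1
    · rw [hsc (U.map C), Matrix.mul_assoc, hmap, Matrix.mul_one]
    · simp only [RingHom.mapMatrix_apply, Matrix.map_mul]
  have hd : (U.map C).det * ((U⁻¹).map C).det = 1 := by
    rw [← Matrix.det_mul, hmap, Matrix.det_one]
  rw [Matrix.charpoly, key, Matrix.det_mul, Matrix.det_mul, mul_right_comm, hd, one_mul]
  rfl

end Aux

/-- The Gremban Laplacian `ℒ` of a signed graph is similar to `L̄ ⊕ L` (block diagonal
with the unsigned and signed Laplacians), so `spec(ℒ) = spec(L̄) ∪ spec(L)` (the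
characteristic polynomial factors); every eigenpair `(λ, x)` of `L` lifts to the
antisymmetric eigenpair `(λ, (x, −x)ᵀ)` of `ℒ` and every eigenpair `(μ, y)` of `L̄`
lifts to the symmetric eigenpair `(μ, (y, y)ᵀ)`. -/

theorem gremban_laplacian_spectral {V : Type*} [Fintype V] [DecidableEq V]
    (S : SignedGraph V) :
    (∃ U : Matrix (V ⊕ V) (V ⊕ V) ℝ, IsUnit U.det ∧
      S.grembanLap = U * Matrix.fromBlocks S.unsignedLap 0 0 S.signedLap * U⁻¹) ∧
    (S.grembanLap).charpoly = (S.unsignedLap).charpoly * (S.signedLap).charpoly ∧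
    (∀ (lam : ℝ) (x : V → ℝ), S.signedLap.mulVec x = lam • x →
      S.grembanLap.mulVec (Sum.elim x (-x)) = lam • Sum.elim x (-x)) ∧
    (∀ (mu : ℝ) (y : V → ℝ), S.unsignedLap.mulVec y = mu • y →
      S.grembanLap.mulVec (Sum.elim y y) = mu • Sum.elim y y) := by
  classical
  set D := S.degMat - S.adjPos with hD
  set N := S.adjNeg with hN
  have hLbar : S.unsignedLap = D - N := rfl
  have hL : S.signedLap = D + N := by
    simp only [SignedGraph.signedLap, hD, hN]
  have hG : S.grembanLap = Matrix.fromBlocks D (-N) (-N) D := rfl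
  set U : Matrix (V ⊕ V) (V ⊕ V) ℝ := Matrix.fromBlocks 1 1 1 (-1) with hU
  set B : Matrix (V ⊕ V) (V ⊕ V) ℝ :=
    Matrix.fromBlocks S.unsignedLap 0 0 S.signedLap with hB
  have hUU : U * U = (2 : ℝ) • (1 : Matrix (V ⊕ V) (V ⊕ V) ℝ) := by
    rw [hU, Matrix.fromBlocks_multiply]
    ext (i | i) (j | j) <;>
      simp [Matrix.one_apply, two_smul, Matrix.add_apply, Matrix.neg_apply] <;>
      (try split) <;> norm_num
  have hdetU : IsUnit U.det := by
    have h2 : U.det * U.det = (2 : ℝ) ^ Fintype.card (V ⊕ V) := by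
      rw [← Matrix.det_mul, hUU, Matrix.det_smul, Matrix.det_one, mul_one]
    refine isUnit_iff_ne_zero.mpr fun h => ?_
    rw [h, mul_zero] at h2
    exact (pow_ne_zero _ (two_ne_zero)) h2.symm
  have hcomm : S.grembanLap * U = U * B := by
    rw [hG, hU, hB, Matrix.fromBlocks_multiply, Matrix.fromBlocks_multiply,
      hLbar, hL]
    ext (i | i) (j | j) <;>
      simp [Matrix.add_apply, Matrix.sub_apply, Matrix.neg_apply] <;> ring
  have : Invertible U := U.invertibleOfIsUnitDet hdetU
  have hsim : S.grembanLap = U * B * U⁻¹ := by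
    exact ((Matrix.mul_inv_eq_iff_eq_mul_of_invertible U (U * B)
      S.grembanLap).mpr hcomm.symm).symm
  refine ⟨⟨U, hdetU, hsim⟩, ?_, ?_, ?_⟩
  · rw [hsim, charpoly_conj_aux _ _ hdetU, hB,
      Matrix.charpoly_fromBlocks_zero₂₁]
  · intro lam x hx
    rw [hL] at hx
    rw [hG, Matrix.fromBlocks_mulVec]
    funext i
    cases i with
    | inl i =>
        have := congrFun hx i
        simp only [Matrix.add_mulVec, Pi.add_apply, Pi.smul_apply, smul_eq_mul] at this ⊢
        simp only [Sum.elim_comp_inl, Sum.elim_comp_inr, Sum.elim_inl, Matrix.mulVec_neg,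
          Matrix.neg_mulVec, Pi.neg_apply, Pi.add_apply] at *
        linarith
    | inr i =>
        have := congrFun hx i
        simp only [Matrix.add_mulVec, Pi.add_apply, Pi.smul_apply, smul_eq_mul] at this ⊢
        simp only [Sum.elim_comp_inl, Sum.elim_comp_inr, Sum.elim_inr, Matrix.mulVec_neg,
          Matrix.neg_mulVec, Pi.neg_apply, Pi.add_apply] at *
        linarith
  · intro mu y hy
    rw [hLbar] at hy
    rw [hG, Matrix.fromBlocks_mulVec]
    funext i
    cases i with
    | inl i =>
        have := congrFun hy i
        simp only [Matrix.sub_mulVec, Pi.sub_apply, Pi.smul_apply, smul_eq_mul] at this ⊢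
        simp only [Sum.elim_comp_inl, Sum.elim_comp_inr, Sum.elim_inl, Matrix.neg_mulVec,
          Pi.neg_apply, Pi.add_apply] at *
        linarith
    | inr i =>
        have := congrFun hy i
        simp only [Matrix.sub_mulVec, Pi.sub_apply, Pi.smul_apply, smul_eq_mul] at this ⊢
        simp only [Sum.elim_comp_inl, Sum.elim_comp_inr, Sum.elim_inr, Matrix.neg_mulVec,
          Pi.neg_apply, Pi.add_apply] at *
        linarith
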